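/- Let u_1,…,u_k be unit vectors in ℝ^n and λ_i > 0 with ∑ λ_i u_i u_i^T = I_n and ∑ λ_i u_i = 0. Let P° = {x : ⟨u_i, x⟩ ≤ 1 for all i}. Then for any symmetric positive definite matrix X and c ∈ ℝ^n with E(X,c) = {x : ⟨X(x−c),x−c⟩ ≤ 1} ⊆ P°, one has det X ≥ 1. -/

import Mathlib

open scoped RealInnerProductSpace
open Matrix

theorem inscribed_ellipsoid_det_ge_one
    (n k : ℕ) (u : Fin k → EuclideanSpace ℝ (Fin n)) (lam : Fin k → ℝ)
    (hlam : ∀ i, 0 < lam i) (hu : ∀ i, ‖u i‖ = 1)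
    (hsum : ∑ i, lam i • Matrix.vecMulVec (u i) (u i) = (1 : Matrix (Fin n) (Fin n) ℝ))
    (hcen : ∑ i, lam i • u i = 0)
    (X : Matrix (Fin n) (Fin n) ℝ) (hX : X.IsSymm) (hXpd : X.PosDef)
    (c : EuclideanSpace ℝ (Fin n))
    (hsub : {x : EuclideanSpace ℝ (Fin n) | ⟪Matrix.toEuclideanLin X (x - c), x - c⟫ ≤ 1}
      ⊆ {x : EuclideanSpace ℝ (Fin n) | ∀ i, ⟪u i, x⟫ ≤ 1}) :
    1 ≤ X.det := by
  rcases Nat.eq_zero_or_pos n with hn | hn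
  · subst hn
    simp [Matrix.det_isEmpty]
  -- setup
  have hYpd : (X⁻¹).PosDef := hXpd.inv
  have hYpsd : (X⁻¹).PosSemidef := hYpd.posSemidef
  set A : Matrix (Fin n) (Fin n) ℝ := (open scoped MatrixOrder in CFC.sqrt (X⁻¹)) with hAdef
  have hApsd : A.PosSemidef := (open scoped MatrixOrder in (CFC.sqrt_nonneg (X⁻¹)).posSemidef)
  have hAH : A.IsHermitian := hApsd.1
  have hAA : A * A = X⁻¹ := (open scoped MatrixOrder in CFC.sqrt_mul_sqrt_self (X⁻¹) hYpsd.nonneg)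
  have hXX : X * X⁻¹ = 1 := Matrix.mul_nonsing_inv X hXpd.det_pos.ne'.isUnit
  -- bridging inner with dotProduct
  have hdot : ∀ (x y : EuclideanSpace ℝ (Fin n)),
      ⟪x, y⟫ = (WithLp.equiv 2 _ x) ⬝ᵥ (WithLp.equiv 2 _ y) := by
    intro x y
    simp [PiLp.inner_apply, dotProduct, mul_comm]
  -- composition of toEuclideanLin
  have hcomp : ∀ (M N : Matrix (Fin n) (Fin n) ℝ) (v : EuclideanSpace ℝ (Fin n)),
      Matrix.toEuclideanLin M (Matrix.toEuclideanLin N v) = Matrix.toEuclideanLin (M * N) v := by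
    intro M N v
    simp [Matrix.toEuclideanLin_apply, Matrix.mulVec_mulVec]
  have hXinvlin : ∀ v : EuclideanSpace ℝ (Fin n),
      Matrix.toEuclideanLin X (Matrix.toEuclideanLin X⁻¹ v) = v := by
    intro v
    rw [hcomp, hXX]
    simp [Matrix.toEuclideanLin_apply]
  -- symmetry of A
  have hAsym : ∀ x y : EuclideanSpace ℝ (Fin n),
      ⟪Matrix.toEuclideanLin A x, y⟫ = ⟪x, Matrix.toEuclideanLin A y⟫ :=
    fun x y => (Matrix.isHermitian_iff_isSymmetric.1 hAH) x y
  -- key: inner u c + ‖A u‖ ≤ 1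
  have key : ∀ i, ⟪u i, c⟫ + ‖Matrix.toEuclideanLin A (u i)‖ ≤ 1 := by
    intro i
    set v := Matrix.toEuclideanLin A (u i) with hv
    have huiYui : ⟪u i, Matrix.toEuclideanLin X⁻¹ (u i)⟫ = ‖v‖ ^ 2 := by
      rw [← hAA, ← hcomp, ← hAsym, ← hv, real_inner_self_eq_norm_sq]
    have hvne : v ≠ 0 := by
      intro h0
      have h1 : Matrix.toEuclideanLin X⁻¹ (u i) = 0 := by
        rw [← hAA, ← hcomp, ← hv, h0, map_zero]
      have h2 : u i = 0 := by
        have := hXinvlin (u i); rw [h1, map_zero] at this; exact this.symm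
      have := hu i; rw [h2] at this; simp at this
    have hvnorm : 0 < ‖v‖ := norm_pos_iff.mpr hvne
    set x : EuclideanSpace ℝ (Fin n) := c + (‖v‖⁻¹) • (Matrix.toEuclideanLin X⁻¹ (u i)) with hx
    have hxc : x - c = (‖v‖⁻¹) • (Matrix.toEuclideanLin X⁻¹ (u i)) := by
      rw [hx]; abel
    have hmem : ⟪Matrix.toEuclideanLin X (x - c), x - c⟫ ≤ 1 := by
      rw [hxc, LinearMap.map_smul, real_inner_smul_left, real_inner_smul_right, hXinvlin, huiYui]
      have : ‖v‖⁻¹ * (‖v‖⁻¹ * ‖v‖ ^ 2) = 1 := by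
        field_simp
      rw [this]
    have hle := hsub hmem i
    have hexp : ⟪u i, x⟫ = ⟪u i, c⟫ + ‖v‖ := by
      rw [hx, inner_add_right, real_inner_smul_right, huiYui]
      congr 1
      rw [sq, ← mul_assoc, inv_mul_cancel₀ hvnorm.ne', one_mul]
    rw [hexp] at hle
    exact hle
  -- trace of A * vecMulVec
  have trace_Avv : ∀ w : Fin n → ℝ, (A * Matrix.vecMulVec w w).trace = w ⬝ᵥ (A *ᵥ w) := by
    intro w
    simp only [Matrix.trace, Matrix.diag, Matrix.mul_apply, Matrix.vecMulVec_apply,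
      dotProduct, Matrix.mulVec, Finset.mul_sum]
    apply Finset.sum_congr rfl
    intro j _
    apply Finset.sum_congr rfl
    intro l _
    ring
  have hinner_dot : ∀ i, ⟪u i, Matrix.toEuclideanLin A (u i)⟫ = (u i) ⬝ᵥ (A *ᵥ (u i)) := by
    intro i
    rw [hdot]
    simp [Matrix.toEuclideanLin_apply]
  have htrA : A.trace = ∑ i, lam i * ((u i) ⬝ᵥ (A *ᵥ (u i))) := by
    calc A.trace = (A * 1).trace := by rw [mul_one]
      _ = (A * ∑ i, lam i • Matrix.vecMulVec (u i) (u i)).trace := by rw [hsum]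
      _ = ∑ i, lam i * (A * Matrix.vecMulVec (u i) (u i)).trace := by
          rw [Finset.mul_sum, Matrix.trace_sum]
          apply Finset.sum_congr rfl
          intro i _
          rw [Matrix.mul_smul, Matrix.trace_smul, smul_eq_mul]
      _ = ∑ i, lam i * ((u i) ⬝ᵥ (A *ᵥ (u i))) := by
          apply Finset.sum_congr rfl
          intro i _
          rw [trace_Avv]
  have hCS : ∀ i, (u i) ⬝ᵥ (A *ᵥ (u i)) ≤ ‖Matrix.toEuclideanLin A (u i)‖ := by
    intro i
    rw [← hinner_dot i]
    calc ⟪u i, Matrix.toEuclideanLin A (u i)⟫ ≤ ‖u i‖ * ‖Matrix.toEuclideanLin A (u i)‖ :=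
          real_inner_le_norm _ _
      _ = ‖Matrix.toEuclideanLin A (u i)‖ := by rw [hu i, one_mul]
  -- sum of lambdas is n
  have hnormsq : ∀ i, (Matrix.vecMulVec (u i) (u i)).trace = 1 := by
    intro i
    have h1 : ⟪u i, u i⟫ = 1 := by rw [real_inner_self_eq_norm_sq, hu i, one_pow]
    rw [hdot] at h1
    simp only [Matrix.trace, Matrix.diag, Matrix.vecMulVec_apply]
    exact h1
  have hlamsum : ∑ i, lam i = (n : ℝ) := by
    have h := congrArg Matrix.trace hsum
    rw [Matrix.trace_sum] at h
    simp only [Matrix.trace_smul, smul_eq_mul, Matrix.trace_one] at h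
    calc ∑ i, lam i = ∑ i, lam i * (Matrix.vecMulVec (u i) (u i)).trace := by
          apply Finset.sum_congr rfl; intro i _; rw [hnormsq, mul_one]
      _ = (n : ℝ) := by rw [h]; simp
  -- center sum
  have hc0 : ∑ i, lam i * ⟪u i, c⟫ = 0 := by
    have h := congrArg (fun w : EuclideanSpace ℝ (Fin n) => ⟪w, c⟫) hcen
    simp only [inner_zero_left] at h
    rw [sum_inner] at h
    simp only [real_inner_smul_left] at h
    exact h
  -- trace bound
  have htrbound : A.trace ≤ (n : ℝ) := by
    rw [htrA]
    calc ∑ i, lam i * ((u i) ⬝ᵥ (A *ᵥ (u i)))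
        ≤ ∑ i, lam i * (1 - ⟪u i, c⟫) := by
          apply Finset.sum_le_sum
          intro i _
          apply mul_le_mul_of_nonneg_left _ (hlam i).le
          have h1 := key i
          have h2 := hCS i
          linarith
      _ = ∑ i, lam i - ∑ i, lam i * ⟪u i, c⟫ := by
          rw [← Finset.sum_sub_distrib]
          apply Finset.sum_congr rfl
          intro i _
          ring
      _ = (n : ℝ) := by rw [hlamsum, hc0, sub_zero]
  -- eigenvalues of A
  have htr_eig : A.trace = ∑ j, hAH.eigenvalues j := by
    simpa using hAH.trace_eq_sum_eigenvalues
  have heignn : ∀ j, 0 ≤ hAH.eigenvalues j := fun j => hApsd.eigenvalues_nonneg j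
  have hdetA : A.det = ∏ j, hAH.eigenvalues j := by
    have := hAH.det_eq_prod_eigenvalues
    simpa using this
  have hdetnn : 0 ≤ A.det := by
    rw [hdetA]; exact Finset.prod_nonneg fun j _ => heignn j
  -- AM-GM
  have hnR : (0:ℝ) < n := by exact_mod_cast hn
  have hdetA_le : A.det ≤ 1 := by
    have hw : ∑ _j : Fin n, (n:ℝ)⁻¹ = 1 := by
      simp only [Finset.sum_const, Finset.card_univ, Fintype.card_fin, nsmul_eq_mul]
      field_simp
    have hgm := Real.geom_mean_le_arith_mean_weighted Finset.univ (fun _ => (n:ℝ)⁻¹)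
        (fun j => hAH.eigenvalues j) (fun _ _ => by positivity) hw (fun j _ => heignn j)
    have hrhs : ∑ j : Fin n, (n:ℝ)⁻¹ * hAH.eigenvalues j ≤ 1 := by
      rw [← Finset.mul_sum, ← htr_eig]
      calc (n:ℝ)⁻¹ * A.trace ≤ (n:ℝ)⁻¹ * n := by
            apply mul_le_mul_of_nonneg_left htrbound (by positivity)
        _ = 1 := by field_simp
    have hlhs : (∏ j, hAH.eigenvalues j) ^ ((n:ℝ)⁻¹) ≤ 1 := by
      rw [← Real.finset_prod_rpow _ _ (fun j _ => heignn j)]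
      exact hgm.trans hrhs
    have hprodnn : 0 ≤ ∏ j, hAH.eigenvalues j := Finset.prod_nonneg fun j _ => heignn j
    have hrep : (∏ j, hAH.eigenvalues j) = ((∏ j, hAH.eigenvalues j) ^ ((n:ℝ)⁻¹)) ^ n :=
      (Real.rpow_inv_natCast_pow hprodnn hn.ne').symm
    rw [hdetA, hrep]
    exact pow_le_one₀ (Real.rpow_nonneg hprodnn _) hlhs
  -- conclude
  have hXdet : 0 < X.det := hXpd.det_pos
  have hYX : (X⁻¹).det = (X.det)⁻¹ := by
    rw [Matrix.det_nonsing_inv, Ring.inverse_eq_inv]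
  have h1 : (X.det)⁻¹ ≤ 1 := by
    rw [← hYX, ← hAA, Matrix.det_mul]
    exact mul_le_one₀ hdetA_le hdetnn hdetA_le
  have h2 := mul_le_mul_of_nonneg_left h1 hXdet.le
  rw [mul_inv_cancel₀ hXdet.ne', mul_one] at h2
  exact h2
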